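/- Let n ≥ 2 and α > 1. Suppose ∫ f^α is finite and positive and each ∫ f_(i)^α is finite and positive. Then Σ_{i=1}^n H_α(f_(i)) − n·H_α(f) ≥ Ψ(α,n), where Ψ(α,n) = (α/(1-α))·Σ_{i=1}^n log( n·C(n-1,i-1)·((i-1)/(n-1))^{i-1}·((n-i)/(n-1))^{n-i} ), with the convention 0^0 = 1. -/

import Mathlib

open MeasureTheory Real

/-- Cumulative distribution function of a density `f`. -/
noncomputable def cdfOf (f : ℝ → ℝ) (x : ℝ) : ℝ := ∫ t in Set.Iic x, f t

/-- Density of the `i`-th order statistic from a sample of size `n` with parent density `f`. -/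
noncomputable def osDen (f : ℝ → ℝ) (n i : ℕ) (x : ℝ) : ℝ :=
  (i : ℝ) * (n.choose i : ℝ) * (cdfOf f x) ^ (i - 1) * (1 - cdfOf f x) ^ (n - i) * f x

/-- Rényi entropy of order `α` of a density `g`: `H_α(g) = (1/(1-α))·log ∫ g^α`. -/
noncomputable def renyiH (α : ℝ) (g : ℝ → ℝ) : ℝ :=
  (1 / (1 - α)) * Real.log (∫ x, g x ^ α)

/-- `Ψ(α,n) = (α/(1-α))·Σ_{i=1}^n log(n·C(n-1,i-1)·((i-1)/(n-1))^(i-1)·((n-i)/(n-1))^(n-i))`,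
with the convention `0^0 = 1` (natural number exponents). -/
noncomputable def Psi (α : ℝ) (n : ℕ) : ℝ :=
  (α / (1 - α)) * ∑ i ∈ Finset.Icc 1 n,
    Real.log ((n : ℝ) * ((n - 1).choose (i - 1) : ℝ)
      * (((i : ℝ) - 1) / ((n : ℝ) - 1)) ^ (i - 1)
      * (((n : ℝ) - (i : ℝ)) / ((n : ℝ) - 1)) ^ (n - i))

lemma amgm_pow (a b : ℕ) (p : ℝ) (hp0 : 0 ≤ p) (hp1 : p ≤ 1) :
    p ^ a * (1 - p) ^ b ≤
      ((a : ℝ) / ((a : ℝ) + (b : ℝ))) ^ a * ((b : ℝ) / ((a : ℝ) + (b : ℝ))) ^ b := by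
  rcases Nat.eq_zero_or_pos a with ha | ha
  · subst ha
    simp only [Nat.cast_zero, pow_zero, one_mul, zero_add]
    rcases Nat.eq_zero_or_pos b with hb | hb
    · subst hb; simp
    · have : (b : ℝ) / (b : ℝ) = 1 := div_self (by positivity)
      rw [this, one_pow]
      exact pow_le_one₀ (by linarith) (by linarith)
  rcases Nat.eq_zero_or_pos b with hb | hb
  · subst hb
    simp only [Nat.cast_zero, pow_zero, mul_one, add_zero]
    have : (a : ℝ) / (a : ℝ) = 1 := div_self (by positivity)
    rw [this, one_pow]
    exact pow_le_one₀ hp0 hp1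
  -- main case
  set s : ℝ := (a : ℝ) + (b : ℝ) with hs_def
  have ha' : (0:ℝ) < a := by exact_mod_cast ha
  have hb' : (0:ℝ) < b := by exact_mod_cast hb
  have hs : (0:ℝ) < s := by positivity
  set p₁ : ℝ := p * s / a with hp₁def
  set p₂ : ℝ := (1 - p) * s / b with hp₂def
  have hp₁ : 0 ≤ p₁ := by positivity
  have hp₂ : 0 ≤ p₂ := by
    have : 0 ≤ 1 - p := by linarith
    positivity
  have hw : (a : ℝ) / s + (b : ℝ) / s = 1 := by field_simp; exact hs_def.symm
  have key := Real.geom_mean_le_arith_mean2_weighted (by positivity) (by positivity) hp₁ hp₂ hw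
  have hrhs : (a : ℝ) / s * p₁ + (b : ℝ) / s * p₂ = 1 := by
    rw [hp₁def, hp₂def]; field_simp; ring
  rw [hrhs] at key
  -- raise to power s = a + b
  have key2 : p₁ ^ a * p₂ ^ b ≤ 1 := by
    have h1 : (p₁ ^ ((a:ℝ)/s) * p₂ ^ ((b:ℝ)/s)) ^ (s : ℝ) ≤ 1 := by
      calc (p₁ ^ ((a:ℝ)/s) * p₂ ^ ((b:ℝ)/s)) ^ (s : ℝ) ≤ 1 ^ (s : ℝ) :=
            Real.rpow_le_rpow (by positivity) key (le_of_lt hs)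
        _ = 1 := Real.one_rpow _
    rw [Real.mul_rpow (by positivity) (by positivity),
      ← Real.rpow_mul hp₁, ← Real.rpow_mul hp₂] at h1
    rw [← Real.rpow_natCast p₁ a, ← Real.rpow_natCast p₂ b]
    have e1 : (a:ℝ)/s * s = (a:ℝ) := by field_simp
    have e2 : (b:ℝ)/s * s = (b:ℝ) := by field_simp
    rw [e1, e2] at h1
    exact h1
  have e1 : p = p₁ * ((a:ℝ)/s) := by rw [hp₁def]; field_simp
  have e2 : (1 - p) = p₂ * ((b:ℝ)/s) := by rw [hp₂def]; field_simp
  clear hp₁def hp₂def hrhs key hp₁ hp₂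
  clear_value p₁ p₂
  have hrw : p ^ a * (1 - p) ^ b =
      (p₁ ^ a * p₂ ^ b) * (((a:ℝ)/s) ^ a * ((b:ℝ)/s) ^ b) := by
    rw [e2, e1]; ring
  rw [hrw]
  exact mul_le_of_le_one_left (by positivity) key2

/-- For `n ≥ 2` and `α > 1`, the difference between the Rényi entropies of a perfect RSS and
an SRS of size `n` is at least `Ψ(α,n)`. -/
theorem renyi_RSS_minus_SRS_ge_Psi (n : ℕ) (hn : 2 ≤ n) (α : ℝ) (hα : 1 < α)
    (f : ℝ → ℝ)
    (hf_meas : Measurable f) (hf_nonneg : ∀ x, 0 ≤ f x)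
    (hf_int : ∫ x, f x = 1)
    (hfi : Integrable (fun x => f x ^ α)) (hfp : 0 < ∫ x, f x ^ α)
    (hoi : ∀ i ∈ Finset.Icc 1 n, Integrable (fun x => osDen f n i x ^ α))
    (hop : ∀ i ∈ Finset.Icc 1 n, 0 < ∫ x, osDen f n i x ^ α) :
    Psi α n ≤ (∑ i ∈ Finset.Icc 1 n, renyiH α (osDen f n i)) - (n : ℝ) * renyiH α f := by
  have hα0 : (0:ℝ) < α := by linarith
  have h1α : 1 - α < 0 := by linarith
  have hn1 : (1:ℝ) < (n:ℝ) := by exact_mod_cast lt_of_lt_of_le one_lt_two hn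
  have hfInt : Integrable f := by
    by_contra h
    rw [integral_undef h] at hf_int; norm_num at hf_int
  have hcdf0 : ∀ x, 0 ≤ cdfOf f x := fun x =>
    setIntegral_nonneg measurableSet_Iic (fun t _ => hf_nonneg t)
  have hcdf1 : ∀ x, cdfOf f x ≤ 1 := fun x => by
    rw [← hf_int]
    exact setIntegral_le_integral hfInt (Filter.Eventually.of_forall hf_nonneg)
  set M : ℕ → ℝ := fun i => (n : ℝ) * ((n - 1).choose (i - 1) : ℝ)
      * (((i : ℝ) - 1) / ((n : ℝ) - 1)) ^ (i - 1)
      * (((n : ℝ) - (i : ℝ)) / ((n : ℝ) - 1)) ^ (n - i) with hM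
  have hMpos : ∀ i ∈ Finset.Icc 1 n, 0 < M i := by
    intro i hi
    simp only [Finset.mem_Icc] at hi
    obtain ⟨hi1, hin⟩ := hi
    have hch : 0 < ((n-1).choose (i-1) : ℝ) := by
      exact_mod_cast Nat.choose_pos (by omega)
    have hp1 : 0 < (((i : ℝ) - 1) / ((n : ℝ) - 1)) ^ (i - 1) := by
      rcases eq_or_lt_of_le hi1 with h | h
      · simp [← h]
      · apply pow_pos
        apply div_pos
        · have : (1:ℝ) < (i:ℝ) := by exact_mod_cast h
          linarith
        · linarith
    have hp2 : 0 < (((n : ℝ) - (i : ℝ)) / ((n : ℝ) - 1)) ^ (n - i) := by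
      rcases eq_or_lt_of_le hin with h | h
      · simp [h]
      · apply pow_pos
        apply div_pos
        · have : (i:ℝ) < (n:ℝ) := by exact_mod_cast h
          linarith
        · linarith
    have hn0 : (0:ℝ) < (n:ℝ) := by linarith
    rw [hM]
    positivity
  have hbound : ∀ i ∈ Finset.Icc 1 n, ∀ x, osDen f n i x ≤ M i * f x := by
    intro i hi x
    simp only [Finset.mem_Icc] at hi
    obtain ⟨hi1, hin⟩ := hi
    have hid : n * ((n-1).choose (i-1)) = n.choose i * i := by
      have h := Nat.add_one_mul_choose_eq (n-1) (i-1)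
      have e1 : n - 1 + 1 = n := by omega
      have e2 : i - 1 + 1 = i := by omega
      rwa [e1, e2] at h
    have hC : (i:ℝ) * (n.choose i : ℝ) = (n:ℝ) * ((n-1).choose (i-1) : ℝ) := by
      have h := congrArg (Nat.cast : ℕ → ℝ) hid
      push_cast at h
      linarith
    have hamgm := amgm_pow (i-1) (n-i) (cdfOf f x) (hcdf0 x) (hcdf1 x)
    have e1 : ((i-1:ℕ):ℝ) = (i:ℝ) - 1 := by
      rw [Nat.cast_sub hi1, Nat.cast_one]
    have e2 : ((n-i:ℕ):ℝ) = (n:ℝ) - (i:ℝ) := by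
      rw [Nat.cast_sub hin]
    rw [e1, e2] at hamgm
    have e3 : (i:ℝ) - 1 + ((n:ℝ) - (i:ℝ)) = (n:ℝ) - 1 := by ring
    rw [e3] at hamgm
    calc osDen f n i x
        = ((i:ℝ) * (n.choose i : ℝ)) *
            ((cdfOf f x) ^ (i-1) * (1 - cdfOf f x) ^ (n-i)) * f x := by
          unfold osDen; ring
      _ ≤ ((i:ℝ) * (n.choose i : ℝ)) *
            ((((i : ℝ) - 1) / ((n : ℝ) - 1)) ^ (i - 1)
              * (((n : ℝ) - (i : ℝ)) / ((n : ℝ) - 1)) ^ (n - i)) * f x := by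
          apply mul_le_mul_of_nonneg_right _ (hf_nonneg x)
          exact mul_le_mul_of_nonneg_left hamgm (by positivity)
      _ = M i * f x := by rw [hC, hM]; ring
  have hkey : ∀ i ∈ Finset.Icc 1 n,
      (α/(1-α)) * Real.log (M i) + renyiH α f ≤ renyiH α (osDen f n i) := by
    intro i hi
    have hMp := hMpos i hi
    have hos0 : ∀ x, 0 ≤ osDen f n i x := by
      intro x
      have h1p : 0 ≤ 1 - cdfOf f x := by linarith [hcdf1 x]
      unfold osDen
      exact mul_nonneg (mul_nonneg (mul_nonneg (mul_nonneg (by positivity)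
        (by positivity)) (pow_nonneg (hcdf0 x) _)) (pow_nonneg h1p _)) (hf_nonneg x)
    have ptwise : ∀ x, osDen f n i x ^ α ≤ M i ^ α * f x ^ α := by
      intro x
      calc osDen f n i x ^ α ≤ (M i * f x) ^ α :=
            Real.rpow_le_rpow (hos0 x) (hbound i hi x) hα0.le
        _ = M i ^ α * f x ^ α := Real.mul_rpow hMp.le (hf_nonneg x)
    have hint : (∫ x, osDen f n i x ^ α) ≤ M i ^ α * ∫ x, f x ^ α := by
      calc (∫ x, osDen f n i x ^ α) ≤ ∫ x, M i ^ α * f x ^ α :=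
            integral_mono (hoi i hi) (hfi.const_mul _) ptwise
        _ = M i ^ α * ∫ x, f x ^ α := integral_const_mul _ _
    have hlog : Real.log (∫ x, osDen f n i x ^ α)
        ≤ α * Real.log (M i) + Real.log (∫ x, f x ^ α) := by
      have h := Real.log_le_log (hop i hi) hint
      rwa [Real.log_mul (Real.rpow_pos_of_pos hMp α).ne' hfp.ne',
        Real.log_rpow hMp] at h
    have hmul := mul_le_mul_of_nonpos_left hlog
      (le_of_lt (div_neg_of_pos_of_neg one_pos h1α))
    unfold renyiH
    calc (α/(1-α)) * Real.log (M i) + (1/(1-α)) * Real.log (∫ x, f x ^ α)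
        = (1/(1-α)) * (α * Real.log (M i) + Real.log (∫ x, f x ^ α)) := by ring
      _ ≤ (1/(1-α)) * Real.log (∫ x, osDen f n i x ^ α) := hmul
  have hsum := Finset.sum_le_sum hkey
  rw [Finset.sum_add_distrib, Finset.sum_const, Nat.card_Icc, ← Finset.mul_sum] at hsum
  have hcard : n + 1 - 1 = n := by omega
  rw [hcard, nsmul_eq_mul] at hsum
  have hPsi : Psi α n = (α/(1-α)) * ∑ i ∈ Finset.Icc 1 n, Real.log (M i) := by
    rw [Psi, hM]
  linarith [hsum, hPsi]
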